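/- Let X be an abelian group with 2X = X, and let f, g : X → ℂ satisfy the Kac–Bernstein functional equation f(x+y)·g(x−y) = f(x)·f(y)·g(x)·g(−y) for all x, y ∈ X, with each of f and g satisfying the Hermitian condition f(−x) = conj(f(x)), and with f(0) = g(0) = 1. Then |f(x)| = |g(x)| for all x ∈ X. -/

import Mathlib

theorem kac_bernstein_abs_eq {X : Type*} [AddCommGroup X]
    (h2 : ∀ x : X, ∃ y : X, 2 • y = x)
    (f g : X → ℂ)
    (hfH : ∀ x : X, f (-x) = starRingEnd ℂ (f x))
    (hgH : ∀ x : X, g (-x) = starRingEnd ℂ (g x))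
    (hf1 : f 0 = 1) (hg1 : g 0 = 1)
    (hKB : ∀ x y : X, f (x + y) * g (x - y) = f x * f y * g x * g (-y)) :
    ∀ x : X, ‖f x‖ = ‖g x‖ := by
  intro x
  obtain ⟨y, hy⟩ := h2 x
  have e1 := hKB y y
  have e2 := hKB y (-y)
  rw [sub_self, hg1, mul_one] at e1
  rw [add_neg_cancel, hf1, one_mul, sub_neg_eq_add, neg_neg] at e2
  have hx : x = y + y := by rw [← hy, two_smul]
  rw [hx, e1, e2, hfH, hgH]
  simp only [norm_mul, Complex.norm_conj]
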